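/- There exists an instance of the swap Schelling game (a finite connected graph G, window size w ≥ 1, tolerance parameter τ, agent sets A and B, and favorite-node assignments) together with a stable bijective placement p and a socially optimal placement p_opt (a placement minimizing the social cost vector lexicographically) such that the total distance cost of p is strictly smaller than the total distance cost of p_opt: Σ_x (d_G(fav_x, p(x)) + 1) < Σ_x (d_G(fav_x, p_opt(x)) + 1). -/

import Mathlib

open SimpleGraph Finset

namespace Schelling

variable {V I : Type*}

/-- The `w`-neighborhood of a node `u`: all nodes `v ≠ u` with `d_G(u,v) ≤ w`. -/
def nbhd (G : SimpleGraph V) (w : ℕ) (u : V) : Set V :=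
  {v | v ≠ u ∧ G.dist u v ≤ w}

/-- `|N⁺(p(x))|`: number of nodes in the `w`-neighborhood of `p x` occupied by
agents of the same type as `x`. -/
noncomputable def sCount (G : SimpleGraph V) (w : ℕ) (tp : I → Bool) (p : I → V) (x : I) : ℕ :=
  {v | v ∈ nbhd G w (p x) ∧ ∃ y, p y = v ∧ tp y = tp x}.ncard

/-- `|N⁻(p(x))|`: number of nodes in the `w`-neighborhood of `p x` occupied by
agents of the other type. -/
noncomputable def dCount (G : SimpleGraph V) (w : ℕ) (tp : I → Bool) (p : I → V) (x : I) : ℕ :=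
  {v | v ∈ nbhd G w (p x) ∧ ∃ y, p y = v ∧ tp y ≠ tp x}.ncard

/-- An agent is isolated if no node of its neighborhood is occupied. -/
def isolated (G : SimpleGraph V) (w : ℕ) (tp : I → Bool) (p : I → V) (x : I) : Prop :=
  sCount G w tp p x + dCount G w tp p x = 0

/-- The (scalar) cost of agent `x`: `τ` if isolated, otherwise
`max 0 (τ - |N⁺|/(|N⁺| + |N⁻|))`. -/
noncomputable def ucost (G : SimpleGraph V) (w : ℕ) (τ : ℝ) (tp : I → Bool) (p : I → V)
    (x : I) : ℝ :=
  if sCount G w tp p x + dCount G w tp p x = 0 then τ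
  else max 0 (τ - (sCount G w tp p x : ℝ) / ((sCount G w tp p x : ℝ) + (dCount G w tp p x : ℝ)))

/-- An agent is happy if it is not isolated and its local happiness ratio is at least `τ`. -/
def happy (G : SimpleGraph V) (w : ℕ) (τ : ℝ) (tp : I → Bool) (p : I → V) (x : I) : Prop :=
  sCount G w tp p x + dCount G w tp p x ≠ 0 ∧
    τ ≤ (sCount G w tp p x : ℝ) / ((sCount G w tp p x : ℝ) + (dCount G w tp p x : ℝ))

/-- The vector cost of agent `x`: scalar cost together with `d_G(fav_x, p x) + 1`,
to be compared lexicographically. -/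
noncomputable def vcost (G : SimpleGraph V) (w : ℕ) (τ : ℝ) (tp : I → Bool) (fav : I → V)
    (p : I → V) (x : I) : ℝ × ℕ :=
  (ucost G w τ tp p x, G.dist (fav x) (p x) + 1)

/-- The number of colored pairs `Φ(p) = (1/2) · Σ_x |N⁻(p(x))|`. -/
noncomputable def Phi [Fintype I] (G : SimpleGraph V) (w : ℕ) (tp : I → Bool) (p : I → V) : ℝ :=
  (1 / 2) * ∑ x : I, (dCount G w tp p x : ℝ)

/-- The pair potential `(Φ(p), Σ_x d_G(fav_x, p x))`, compared lexicographically. -/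
noncomputable def PhiPair [Fintype I] (G : SimpleGraph V) (w : ℕ) (tp : I → Bool) (fav : I → V)
    (p : I → V) : ℝ × ℕ :=
  (Phi G w tp p, ∑ x : I, G.dist (fav x) (p x))

/-- The placement obtained from `p` by swapping the locations of agents `x` and `y`. -/
def swapP [DecidableEq I] (p : I → V) (x y : I) : I → V := p ∘ Equiv.swap x y

/-- The agents of type `A`. -/
def typeA [Fintype I] (tp : I → Bool) : Finset I := Finset.univ.filter (fun i => tp i = true)

/-- The agents of type `B`. -/
def typeB [Fintype I] (tp : I → Bool) : Finset I := Finset.univ.filter (fun i => tp i = false)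

/-- A placement is stable for the uniform SSG if no pair of agents can both strictly
decrease their cost by swapping. -/
def uStable (G : SimpleGraph V) (w : ℕ) (τ : ℝ) (tp : I → Bool) (p : I → V)
    [DecidableEq I] : Prop :=
  ∀ x y : I, ¬ (ucost G w τ tp (swapP p x y) x < ucost G w τ tp p x ∧
                ucost G w τ tp (swapP p x y) y < ucost G w τ tp p y)

/-- A placement is stable for the SSG with favorite nodes if no pair of agents can both
strictly lexicographically decrease their cost vector by swapping. -/
def vStable (G : SimpleGraph V) (w : ℕ) (τ : ℝ) (tp : I → Bool) (fav : I → V) (p : I → V)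
    [DecidableEq I] : Prop :=
  ∀ x y : I, ¬ (toLex (vcost G w τ tp fav (swapP p x y) x) < toLex (vcost G w τ tp fav p x) ∧
                toLex (vcost G w τ tp fav (swapP p x y) y) < toLex (vcost G w τ tp fav p y))



open Classical in
/-- The weight of the (ordered) pair of nodes `(u,v)` in the jump-game potential:
`1` if both are occupied by agents of different types, `1/3` if at least one is empty,
and `0` otherwise. -/
noncomputable def edgeW (tp : I → Bool) (p : I → V) (u v : V) : ℝ :=
  if ∃ x y : I, p x = u ∧ p y = v ∧ tp x ≠ tp y then 1
  else if (∀ x : I, p x ≠ u) ∨ (∀ y : I, p y ≠ v) then 1 / 3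
  else 0

open Classical in
/-- The edge-weight potential `Φ(p) = Σ_{e ∈ E} w_e(p)`, written as half the sum over
ordered adjacent pairs (each edge is counted twice, and `edgeW` is symmetric). -/
noncomputable def jumpPhi [Fintype V] (G : SimpleGraph V) (tp : I → Bool) (p : I → V) : ℝ :=
  (1 / 2) * ∑ u : V, ∑ v : V, if G.Adj u v then edgeW tp p u v else 0

/-- A placement is stable for the uniform JSG if no agent can strictly decrease her cost
by jumping to an empty node. -/
def jStable (G : SimpleGraph V) (w : ℕ) (τ : ℝ) (tp : I → Bool) (p : I → V)
    [DecidableEq I] : Prop :=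
  ∀ (x : I) (v : V), v ∉ Set.range p →
    ¬ (ucost G w τ tp (Function.update p x v) x < ucost G w τ tp p x)

/-- The social cost of a placement: the number of unhappy agents together with the total
distance cost, compared lexicographically. -/
noncomputable def socialCost [Fintype I] (G : SimpleGraph V) (w : ℕ) (τ : ℝ) (tp : I → Bool)
    (fav : I → V) (p : I → V) : ℕ × ℕ :=
  ({x : I | ¬ happy G w τ tp p x}.ncard, ∑ x : I, (G.dist (fav x) (p x) + 1))


end Schelling

open Schelling

namespace SchellingAux

open Schelling SimpleGraph Finset

/-- The concrete 4-node graph: edges 01, 02, 03, 12. -/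
def adj4 (a b : Fin 4) : Prop := ((a, b) : Fin 4 × Fin 4) ∈
    ([(0,1),(1,0),(0,2),(2,0),(0,3),(3,0),(1,2),(2,1)] : List (Fin 4 × Fin 4))

instance : DecidableRel adj4 := fun a b =>
  inferInstanceAs (Decidable (_ ∈ _))

def G4 : SimpleGraph (Fin 4) where
  Adj := adj4
  symm := ⟨fun a b h => (by decide : ∀ a b : Fin 4, adj4 a b → adj4 b a) a b h⟩
  loopless := ⟨fun a => (by decide : ∀ a : Fin 4, ¬ adj4 a a) a⟩

instance : DecidableRel G4.Adj := fun a b => inferInstanceAs (Decidable (adj4 a b))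

lemma G4_conn : G4.Connected := by
  rw [SimpleGraph.connected_iff]
  have h : ∀ u : Fin 4, G4.Reachable u 0 := by
    intro u
    by_cases hu : u = 0
    · subst hu; exact SimpleGraph.Reachable.refl 0
    · have : G4.Adj u 0 := by fin_cases u <;> first | (exact absurd rfl hu) | decide
      exact this.reachable
  exact ⟨fun u v => (h u).trans (h v).symm, ⟨0⟩⟩

/-- The type pattern: nodes 0,1 are type B (false), nodes 2,3 are type A (true). -/
def tp4 : Fin 4 → Bool := ![false, false, true, true]

/-- The optimal placement: swap agents 0 and 2. -/
def pOpt4 : Fin 4 → Fin 4 := ⇑(Equiv.swap (0 : Fin 4) 2)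

lemma mem_nbhd_one {V : Type*} (G : SimpleGraph V) (hc : G.Connected) (u v : V) :
    v ∈ nbhd G 1 u ↔ G.Adj u v := by
  simp only [nbhd, Set.mem_setOf_eq]
  constructor
  · rintro ⟨hne, hd⟩
    have h0 : G.dist u v ≠ 0 := fun h => hne ((hc.dist_eq_zero_iff.mp h).symm)
    exact SimpleGraph.dist_eq_one_iff_adj.mp
      (le_antisymm hd (Nat.one_le_iff_ne_zero.mpr h0))
  · intro h
    exact ⟨h.ne', le_of_eq (SimpleGraph.dist_eq_one_iff_adj.mpr h)⟩

lemma sCount_eval {V I : Type*} [Fintype V] [DecidableEq V] [Fintype I]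
    (G : SimpleGraph V) [DecidableRel G.Adj] (hc : G.Connected)
    (tp : I → Bool) (p : I → V) (x : I) :
    sCount G 1 tp p x
      = (univ.filter (fun v => G.Adj (p x) v ∧ ∃ y, p y = v ∧ tp y = tp x)).card := by
  rw [sCount, ← Set.ncard_coe_finset]
  congr 1
  ext v
  simp only [Set.mem_setOf_eq, Finset.coe_filter, Finset.mem_univ, true_and,
    mem_nbhd_one G hc]

lemma dCount_eval {V I : Type*} [Fintype V] [DecidableEq V] [Fintype I]
    (G : SimpleGraph V) [DecidableRel G.Adj] (hc : G.Connected)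
    (tp : I → Bool) (p : I → V) (x : I) :
    dCount G 1 tp p x
      = (univ.filter (fun v => G.Adj (p x) v ∧ ∃ y, p y = v ∧ tp y ≠ tp x)).card := by
  rw [dCount, ← Set.ncard_coe_finset]
  congr 1
  ext v
  simp only [Set.mem_setOf_eq, Finset.coe_filter, Finset.mem_univ, true_and,
    mem_nbhd_one G hc]

lemma ucost_nonneg {V I : Type*} (G : SimpleGraph V) (w : ℕ) {τ : ℝ} (hτ : 0 ≤ τ)
    (tp : I → Bool) (p : I → V) (x : I) : 0 ≤ ucost G w τ tp p x := by
  unfold ucost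
  split
  · exact hτ
  · exact le_max_left _ _

lemma ucost_eq_zero_of_happy {V I : Type*} {G : SimpleGraph V} {w : ℕ} {τ : ℝ}
    {tp : I → Bool} {p : I → V} {x : I} (h : happy G w τ tp p x) :
    ucost G w τ tp p x = 0 := by
  obtain ⟨h1, h2⟩ := h
  unfold ucost
  rw [if_neg h1]
  exact max_eq_left (sub_nonpos.mpr h2)

lemma exists_swap_iff {V I : Type*} [DecidableEq I] (p : I → V) (x y : I) (tp : I → Bool)
    (hswap : ∀ z, tp (Equiv.swap x y z) = tp z) (v : V) (Q : Bool → Prop) :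
    (∃ z, p (Equiv.swap x y z) = v ∧ Q (tp z)) ↔ (∃ z, p z = v ∧ Q (tp z)) := by
  constructor
  · rintro ⟨z, h1, h2⟩
    refine ⟨Equiv.swap x y z, h1, ?_⟩
    rw [hswap z]; exact h2
  · rintro ⟨z, h1, h2⟩
    refine ⟨Equiv.swap x y z, ?_, ?_⟩
    · rw [Equiv.swap_apply_self]; exact h1
    · rw [hswap z]; exact h2

lemma tp_swap_eq {I : Type*} [DecidableEq I] (tp : I → Bool) {x y : I} (h : tp x = tp y) :
    ∀ z, tp (Equiv.swap x y z) = tp z := by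
  intro z
  rcases eq_or_ne z x with rfl | hzx
  · rw [Equiv.swap_apply_left]; exact h.symm
  rcases eq_or_ne z y with rfl | hzy
  · rw [Equiv.swap_apply_right]; exact h
  · rw [Equiv.swap_apply_of_ne_of_ne hzx hzy]

lemma ucost_swap_same {V I : Type*} [DecidableEq I] (G : SimpleGraph V) (w : ℕ) (τ : ℝ)
    (tp : I → Bool) (p : I → V) {x y : I} (h : tp x = tp y) :
    ucost G w τ tp (swapP p x y) x = ucost G w τ tp p y := by
  have hswap := tp_swap_eq tp h
  have hs : sCount G w tp (swapP p x y) x = sCount G w tp p y := by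
    unfold sCount swapP
    simp only [Function.comp_apply, Equiv.swap_apply_left, h]
    congr 1
    ext v
    simp only [Set.mem_setOf_eq]
    exact and_congr Iff.rfl (exists_swap_iff p x y tp hswap v (fun b => b = tp y))
  have hd : dCount G w tp (swapP p x y) x = dCount G w tp p y := by
    unfold dCount swapP
    simp only [Function.comp_apply, Equiv.swap_apply_left, h]
    congr 1
    ext v
    simp only [Set.mem_setOf_eq]
    exact and_congr Iff.rfl (exists_swap_iff p x y tp hswap v (fun b => b ≠ tp y))
  unfold ucost
  rw [hs, hd]

end SchellingAux

open SchellingAux in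
/-- There exists an instance of the swap Schelling game together with a
stable bijective placement `p` and a socially optimal bijective placement `p_opt`
(minimizing the social cost vector lexicographically) such that the total distance cost of
`p` is strictly smaller than the total distance cost of `p_opt`. -/
theorem SSG_stable_beats_optimum_distance :
    ∃ (V : Type) (_ : Fintype V) (I : Type) (_ : Fintype I) (_ : DecidableEq I)
      (G : SimpleGraph V) (w : ℕ) (τ : ℝ) (tp : I → Bool) (fav : I → V)
      (p pOpt : I → V),
      G.Connected ∧ 1 ≤ w ∧ 0 ≤ τ ∧ τ ≤ 1 ∧
      2 ≤ (typeA tp).card ∧ 2 ≤ (typeB tp).card ∧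
      Function.Bijective p ∧ vStable G w τ tp fav p ∧
      Function.Bijective pOpt ∧
      (∀ q : I → V, Function.Bijective q →
        toLex (socialCost G w τ tp fav pOpt) ≤ toLex (socialCost G w τ tp fav q)) ∧
      (∑ z : I, (G.dist (fav z) (p z) + 1)) < (∑ z : I, (G.dist (fav z) (pOpt z) + 1)) := by

  classical
  have hτ0 : (0:ℝ) ≤ 1/3 := by norm_num
  -- counts under the identity placement
  have hs0 : sCount G4 1 tp4 (id : Fin 4 → Fin 4) 0 = 1 := by
    rw [sCount_eval G4 G4_conn]; decide
  have hd0 : dCount G4 1 tp4 (id : Fin 4 → Fin 4) 0 = 2 := by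
    rw [dCount_eval G4 G4_conn]; decide
  have hs1 : sCount G4 1 tp4 (id : Fin 4 → Fin 4) 1 = 1 := by
    rw [sCount_eval G4 G4_conn]; decide
  have hd1 : dCount G4 1 tp4 (id : Fin 4 → Fin 4) 1 = 1 := by
    rw [dCount_eval G4 G4_conn]; decide
  have hs2 : sCount G4 1 tp4 (id : Fin 4 → Fin 4) 2 = 0 := by
    rw [sCount_eval G4 G4_conn]; decide
  have hd2 : dCount G4 1 tp4 (id : Fin 4 → Fin 4) 2 = 2 := by
    rw [dCount_eval G4 G4_conn]; decide
  -- counts under the optimal placement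
  have hos0 : sCount G4 1 tp4 pOpt4 0 = 1 := by
    rw [sCount_eval G4 G4_conn]; decide
  have hod0 : dCount G4 1 tp4 pOpt4 0 = 1 := by
    rw [dCount_eval G4 G4_conn]; decide
  have hos1 : sCount G4 1 tp4 pOpt4 1 = 1 := by
    rw [sCount_eval G4 G4_conn]; decide
  have hod1 : dCount G4 1 tp4 pOpt4 1 = 1 := by
    rw [dCount_eval G4 G4_conn]; decide
  have hos2 : sCount G4 1 tp4 pOpt4 2 = 1 := by
    rw [sCount_eval G4 G4_conn]; decide
  have hod2 : dCount G4 1 tp4 pOpt4 2 = 2 := by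
    rw [dCount_eval G4 G4_conn]; decide
  have hos3 : sCount G4 1 tp4 pOpt4 3 = 1 := by
    rw [sCount_eval G4 G4_conn]; decide
  have hod3 : dCount G4 1 tp4 pOpt4 3 = 0 := by
    rw [dCount_eval G4 G4_conn]; decide
  -- happiness facts
  have H0 : happy G4 1 (1/3) tp4 (id : Fin 4 → Fin 4) 0 :=
    ⟨by rw [hs0, hd0]; norm_num, by rw [hs0, hd0]; norm_num⟩
  have H1 : happy G4 1 (1/3) tp4 (id : Fin 4 → Fin 4) 1 :=
    ⟨by rw [hs1, hd1]; norm_num, by rw [hs1, hd1]; norm_num⟩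
  have notH2 : ¬ happy G4 1 (1/3) tp4 (id : Fin 4 → Fin 4) 2 := by
    rintro ⟨-, h2⟩
    rw [hs2, hd2] at h2
    norm_num at h2
  have hBhappy : ∀ x : Fin 4, tp4 x = false → happy G4 1 (1/3) tp4 (id : Fin 4 → Fin 4) x := by
    intro x hx
    fin_cases x
    · exact H0
    · exact H1
    · exact absurd hx (by decide)
    · exact absurd hx (by decide)
  have Hopt0 : happy G4 1 (1/3) tp4 pOpt4 0 :=
    ⟨by rw [hos0, hod0]; norm_num, by rw [hos0, hod0]; norm_num⟩
  have Hopt1 : happy G4 1 (1/3) tp4 pOpt4 1 :=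
    ⟨by rw [hos1, hod1]; norm_num, by rw [hos1, hod1]; norm_num⟩
  have Hopt2 : happy G4 1 (1/3) tp4 pOpt4 2 :=
    ⟨by rw [hos2, hod2]; norm_num, by rw [hos2, hod2]; norm_num⟩
  have Hopt3 : happy G4 1 (1/3) tp4 pOpt4 3 :=
    ⟨by rw [hos3, hod3]; norm_num, by rw [hos3, hod3]; norm_num⟩
  have hOptHappy : ∀ x : Fin 4, happy G4 1 (1/3) tp4 pOpt4 x := by
    intro x
    fin_cases x
    · exact Hopt0
    · exact Hopt1
    · exact Hopt2
    · exact Hopt3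
  -- stability of the identity placement
  have hStable : vStable G4 1 (1/3) tp4 (id : Fin 4 → Fin 4) (id : Fin 4 → Fin 4) := by
    rintro x y ⟨hx, hy⟩
    rcases eq_or_ne x y with rfl | hxy
    · have hsw : swapP (id : Fin 4 → Fin 4) x x = id := by
        funext z
        simp [swapP]
      rw [hsw] at hx
      exact absurd hx (lt_irrefl _)
    · -- the second coordinate cannot decrease since everyone sits at her favorite node
      have key : ∀ z : Fin 4,
          toLex (vcost G4 1 (1/3) tp4 id (swapP (id : Fin 4 → Fin 4) x y) z) <
            toLex (vcost G4 1 (1/3) tp4 id (id : Fin 4 → Fin 4) z) →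
          ucost G4 1 (1/3) tp4 (swapP (id : Fin 4 → Fin 4) x y) z <
            ucost G4 1 (1/3) tp4 (id : Fin 4 → Fin 4) z := by
        intro z h
        rw [Prod.Lex.lt_iff] at h
        rcases h with h | ⟨-, h2⟩
        · exact h
        · exfalso
          simp only [vcost, id_eq, SimpleGraph.dist_self, ofLex_toLex] at h2
          omega
      have hx' := key x hx
      have hy' := key y hy
      rcases eq_or_ne (tp4 x) (tp4 y) with htp | htp
      · rw [ucost_swap_same G4 1 (1/3) tp4 id htp] at hx'
        have hsw : swapP (id : Fin 4 → Fin 4) x y = swapP (id : Fin 4 → Fin 4) y x := by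
          funext z
          simp [swapP, Equiv.swap_comm]
        rw [hsw, ucost_swap_same G4 1 (1/3) tp4 id htp.symm] at hy'
        exact absurd hx' (lt_asymm hy')
      · -- one of the two agents has type false, hence is happy and pays 0
        rcases Bool.eq_false_or_eq_true (tp4 x) with hxt | hxf
        · have hyf : tp4 y = false := by
            cases hyy : tp4 y
            · rfl
            · rw [hxt, hyy] at htp; exact absurd rfl htp
          have h0 : ucost G4 1 (1/3) tp4 (id : Fin 4 → Fin 4) y = 0 :=
            ucost_eq_zero_of_happy (hBhappy y hyf)
          rw [h0] at hy'
          exact absurd hy' (not_lt.mpr (ucost_nonneg G4 1 hτ0 tp4 _ y))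
        · have h0 : ucost G4 1 (1/3) tp4 (id : Fin 4 → Fin 4) x = 0 :=
            ucost_eq_zero_of_happy (hBhappy x hxf)
          rw [h0] at hx'
          exact absurd hx' (not_lt.mpr (ucost_nonneg G4 1 hτ0 tp4 _ x))
  -- the unhappy set of the optimal placement is empty
  have hOptSet : {x : Fin 4 | ¬ happy G4 1 (1/3) tp4 pOpt4 x} = ∅ :=
    Set.eq_empty_iff_forall_notMem.mpr (fun x hx => hx (hOptHappy x))
  -- distances of the optimum
  have hd02 : G4.dist 0 2 = 1 := SimpleGraph.dist_eq_one_iff_adj.mpr (by decide)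
  have hd20 : G4.dist 2 0 = 1 := SimpleGraph.dist_eq_one_iff_adj.mpr (by decide)
  have hOptSum : ∑ z : Fin 4, (G4.dist (id z) (pOpt4 z) + 1) = 6 := by
    have e0 : pOpt4 0 = 2 := by decide
    have e1 : pOpt4 1 = 1 := by decide
    have e2 : pOpt4 2 = 0 := by decide
    have e3 : pOpt4 3 = 3 := by decide
    rw [Fin.sum_univ_four, e0, e1, e2, e3]
    simp only [id_eq, hd02, hd20, SimpleGraph.dist_self]
  have hIdSum : ∑ z : Fin 4, (G4.dist (id z) ((id : Fin 4 → Fin 4) z) + 1) = 4 := by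
    simp [SimpleGraph.dist_self]
  refine ⟨Fin 4, inferInstance, Fin 4, inferInstance, inferInstance, G4, 1, 1/3, tp4, id,
    id, pOpt4, G4_conn, le_refl 1, by norm_num, by norm_num, by decide, by decide,
    Function.bijective_id, hStable, (Equiv.swap (0 : Fin 4) 2).bijective, ?_, ?_⟩
  · -- optimality of pOpt4
    intro q hq
    by_cases hall : ∀ x : Fin 4, happy G4 1 (1/3) tp4 q x
    · have hqSet : {x : Fin 4 | ¬ happy G4 1 (1/3) tp4 q x} = ∅ :=
        Set.eq_empty_iff_forall_notMem.mpr (fun x hx => hx (hall x))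
      rw [Prod.Lex.le_iff]
      right
      constructor
      · simp only [socialCost, hOptSet, hqSet, ofLex_toLex]
      · simp only [socialCost, hOptSum, ofLex_toLex]
        -- q is not the identity, so it moves at least two agents
        have hqid : q ≠ (id : Fin 4 → Fin 4) := by
          intro h
          exact notH2 (by rw [← h]; exact hall 2)
        obtain ⟨z1, hz1⟩ := Function.ne_iff.mp hqid
        simp only [id_eq] at hz1
        set z2 := q z1 with hz2def
        have hz2 : q z2 ≠ z2 := by
          intro h
          exact hz1 (hq.1 (by rw [h]))
        have hne12 : z1 ≠ z2 := by
          intro h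
          exact hz1 (by rw [← h] at hz2def; exact hz2def.symm)
        have hdist1 : 1 ≤ G4.dist (id z1) (q z1) := G4_conn.pos_dist_of_ne (by simpa using hz1.symm)
        have hdist2 : 1 ≤ G4.dist (id z2) (q z2) := G4_conn.pos_dist_of_ne (by simpa using hz2.symm)
        have hsub : ∑ z ∈ ({z1, z2} : Finset (Fin 4)), G4.dist (id z) (q z) ≤
            ∑ z : Fin 4, G4.dist (id z) (q z) :=
          Finset.sum_le_sum_of_subset (Finset.subset_univ _)
        rw [Finset.sum_pair hne12] at hsub
        have : ∑ z : Fin 4, (G4.dist (id z) (q z) + 1) =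
            (∑ z : Fin 4, G4.dist (id z) (q z)) + 4 := by
          rw [Finset.sum_add_distrib]
          simp
        omega
    · push_neg at hall
      obtain ⟨x, hx⟩ := hall
      rw [Prod.Lex.le_iff]
      left
      simp only [socialCost, hOptSet, Set.ncard_empty]
      exact (Set.ncard_pos (Set.toFinite _)).mpr ⟨x, hx⟩
  · rw [hIdSum, hOptSum]
    norm_num
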